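/- Let p ≥ 1 be a real number, and let F ∈ ℝ^{n×k} and G ∈ ℝ^{m×k} be matrices of full column rank (rank k). Then there exists an invertible matrix N ∈ ℝ^{k×k} such that ‖FN‖_p^p = ‖G(N⁻¹)^⊤‖_p^p and ‖FN‖_p^p ≤ k · ( ‖FG^⊤‖_p^p )^{1/2}. -/

import Mathlib

open Matrix

/-- Entrywise `p`-th power sum for real `p`: `‖M‖_p^p = ∑_{i,j} |M_{ij}|^p`. -/
noncomputable def lpPowR (p : ℝ) {n m : ℕ} (M : Matrix (Fin n) (Fin m) ℝ) : ℝ :=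
  ∑ i, ∑ j, |M i j| ^ p

section Aux

variable {p : ℝ}

private lemma lpPowR_smul (hp : 0 < p) {n m : ℕ} (a : ℝ) (M : Matrix (Fin n) (Fin m) ℝ) :
    lpPowR p (a • M) = |a| ^ p * lpPowR p M := by
  unfold lpPowR
  rw [Finset.mul_sum]
  refine Finset.sum_congr rfl fun i _ => ?_
  rw [Finset.mul_sum]
  refine Finset.sum_congr rfl fun j _ => ?_
  rw [Matrix.smul_apply, smul_eq_mul, abs_mul, Real.mul_rpow (abs_nonneg _) (abs_nonneg _)]

private lemma det_updateColumn_mulVec {k : ℕ} (N : Matrix (Fin k) (Fin k) ℝ)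
    (d : Fin k → ℝ) (i : Fin k) :
    (N.updateCol i (N.mulVec d)).det = d i * N.det := by
  have h2 : N.mulVec d = fun r => ∑ x, d x • N r x := by
    ext r; simp [Matrix.mulVec, dotProduct, mul_comm]
  rw [h2]
  have := Matrix.det_updateCol_sum N i d
  rwa [smul_eq_mul] at this

private lemma mulVec_inj {n k : ℕ} (F : Matrix (Fin n) (Fin k) ℝ) (hF : F.rank = k) :
    Function.Injective F.mulVec := by
  have h := LinearMap.finrank_range_add_finrank_ker F.mulVecLin
  rw [Matrix.rank] at hF
  rw [hF] at h
  simp [Module.finrank_pi] at h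
  exact LinearMap.ker_eq_bot.mp h

end Aux

/-- **Pairwise ℓ_p balancing (via Auerbach's lemma).**  For `p ≥ 1` and full column rank
`F ∈ ℝ^{n×k}`, `G ∈ ℝ^{m×k}` there is an invertible `N ∈ ℝ^{k×k}` with
`‖FN‖_p^p = ‖G(N⁻¹)ᵀ‖_p^p ≤ k·(‖FGᵀ‖_p^p)^{1/2}`. -/
theorem pairwise_lp_balancing (p : ℝ) (hp : 1 ≤ p) {n m k : ℕ}
    (F : Matrix (Fin n) (Fin k) ℝ) (G : Matrix (Fin m) (Fin k) ℝ)
    (hF : F.rank = k) (hG : G.rank = k) :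
    ∃ N : Matrix (Fin k) (Fin k) ℝ, IsUnit N.det ∧
      lpPowR p (F * N) = lpPowR p (G * (N⁻¹)ᵀ) ∧
      lpPowR p (F * N) ≤ (k : ℝ) * Real.sqrt (lpPowR p (F * Gᵀ)) := by
  have hp0 : 0 < p := lt_of_lt_of_le one_pos hp
  rcases Nat.eq_zero_or_pos k with hk | hk
  · subst hk
    refine ⟨1, by simp, ?_, ?_⟩
    · simp [lpPowR]
    · simp [lpPowR, Real.sqrt_nonneg]
  -- main case : 1 ≤ k
  have hkR : (0:ℝ) < k := by exact_mod_cast hk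
  haveI : Nonempty (Fin k) := ⟨⟨0, hk⟩⟩
  have hFinj : Function.Injective F.mulVec := mulVec_inj F hF
  -- the subspace norm-power function
  set g : (Fin k → ℝ) → ℝ := fun v => ∑ r, |F.mulVec v r| ^ p with hgdef
  have habs_cont : Continuous fun x : ℝ => |x| ^ p := by
    rw [continuous_iff_continuousAt]
    intro x
    exact (Real.continuousAt_rpow_const _ _ (Or.inr hp0.le)).comp continuous_abs.continuousAt
  have g_cont : Continuous g := by
    refine continuous_finset_sum _ fun r _ => habs_cont.comp ?_
    have : Continuous fun v : Fin k → ℝ => ∑ a, F r a * v a :=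
      continuous_finset_sum _ fun a _ => continuous_const.mul (continuous_apply a)
    convert this using 1
    rfl
  have g_nonneg : ∀ v, 0 ≤ g v := fun v =>
    Finset.sum_nonneg fun r _ => Real.rpow_nonneg (abs_nonneg _) p
  have g_smul : ∀ (a : ℝ) (v), g (a • v) = |a| ^ p * g v := by
    intro a v
    simp only [hgdef, Matrix.mulVec_smul]
    rw [Finset.mul_sum]
    refine Finset.sum_congr rfl fun r _ => ?_
    rw [Pi.smul_apply, smul_eq_mul, abs_mul, Real.mul_rpow (abs_nonneg _) (abs_nonneg _)]
  have g_pos : ∀ v, v ≠ 0 → 0 < g v := by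
    intro v hv
    have hFv : F.mulVec v ≠ 0 := by
      intro h
      exact hv (hFinj (by rw [h, Matrix.mulVec_zero]))
    obtain ⟨r, hr⟩ := Function.ne_iff.mp hFv
    refine Finset.sum_pos' (fun s _ => Real.rpow_nonneg (abs_nonneg _) p) ⟨r, Finset.mem_univ r, ?_⟩
    exact Real.rpow_pos_of_pos (abs_pos.mpr hr) p
  have g_zero : g 0 = 0 := by
    simp [hgdef, Matrix.mulVec_zero, Real.zero_rpow hp0.ne']
  -- uniform lower bound on the sphere
  have hsne : (Metric.sphere (0 : Fin k → ℝ) 1).Nonempty :=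
    NormedSpace.sphere_nonempty.mpr zero_le_one
  obtain ⟨u0, hu0, hmin'⟩ := (isCompact_sphere (0 : Fin k → ℝ) 1).exists_isMinOn hsne
    g_cont.continuousOn
  have hmin : ∀ u ∈ Metric.sphere (0 : Fin k → ℝ) 1, g u0 ≤ g u := fun u hu => hmin' hu
  have hu0n : ‖u0‖ = 1 := mem_sphere_zero_iff_norm.mp hu0
  set ε : ℝ := g u0 with hεdef
  have hε : 0 < ε := g_pos u0 (by intro h; rw [h] at hu0n; simp at hu0n)
  set R : ℝ := ε⁻¹ ^ (1/p) with hRdef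
  have hR0 : 0 ≤ R := Real.rpow_nonneg (inv_nonneg.mpr hε.le) _
  have key : ∀ v : Fin k → ℝ, g v = 1 → ‖v‖ ≤ R := by
    intro v hv
    have hv0 : v ≠ 0 := by intro h; rw [h, g_zero] at hv; norm_num at hv
    have hnv : 0 < ‖v‖ := norm_pos_iff.mpr hv0
    set u : Fin k → ℝ := ‖v‖⁻¹ • v with hudef
    have hun : u ∈ Metric.sphere (0 : Fin k → ℝ) 1 := by
      rw [mem_sphere_zero_iff_norm, hudef, norm_smul, norm_inv, norm_norm,
        inv_mul_cancel₀ hnv.ne']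
    have hvu : v = ‖v‖ • u := by
      rw [hudef, smul_smul, mul_inv_cancel₀ hnv.ne', one_smul]
    have h1 : ‖v‖ ^ p * ε ≤ 1 := by
      calc ‖v‖ ^ p * ε ≤ ‖v‖ ^ p * g u :=
            mul_le_mul_of_nonneg_left (hmin u hun) (Real.rpow_nonneg (norm_nonneg _) p)
        _ = g v := by
              have hgv : g v = ‖v‖ ^ p * g u := by
                conv_lhs => rw [hvu]
                rw [g_smul ‖v‖ u, abs_of_nonneg (norm_nonneg v)]
              rw [hgv]
        _ = 1 := hv
    have h2 : ‖v‖ ^ p ≤ ε⁻¹ := by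
      rw [inv_eq_one_div, le_div_iff₀ hε]; exact h1
    calc ‖v‖ = (‖v‖ ^ p) ^ (1/p) := by
          rw [one_div, Real.rpow_rpow_inv (norm_nonneg v) hp0.ne']
      _ ≤ R := Real.rpow_le_rpow (Real.rpow_nonneg (norm_nonneg _) p) h2
          (by positivity)
  -- the feasible set of column systems
  set S : Set (Fin k → Fin k → ℝ) := {c | ∀ i, g (c i) = 1} with hSdef
  have hSclosed : IsClosed S := by
    have hSeq : S = ⋂ i, (fun c : Fin k → Fin k → ℝ => g (c i)) ⁻¹' {1} := by
      ext c; simp [hSdef, Set.mem_iInter]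
    rw [hSeq]
    exact isClosed_iInter fun i =>
      IsClosed.preimage (g_cont.comp (continuous_apply i)) isClosed_singleton
  have hSbdd : Bornology.IsBounded S := by
    refine (Metric.isBounded_closedBall (x := (0 : Fin k → Fin k → ℝ)) (r := R)).subset ?_
    intro c hc
    rw [Metric.mem_closedBall, dist_zero_right, pi_norm_le_iff_of_nonneg hR0]
    exact fun i => key (c i) (hc i)
  have hScomp : IsCompact S := Metric.isCompact_of_isClosed_isBounded hSclosed hSbdd
  -- a feasible invertible starting point
  set s0 : Fin k → ℝ := fun i => (g (Pi.single i 1)) ^ (-(1/p)) with hs0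
  have hsingle_ne : ∀ i : Fin k, (Pi.single i 1 : Fin k → ℝ) ≠ 0 := by
    intro i h
    have := congrFun h i
    simp at this
  have hgsingle : ∀ i, 0 < g (Pi.single i 1) := fun i => g_pos _ (hsingle_ne i)
  have hs0pos : ∀ i, 0 < s0 i := fun i => Real.rpow_pos_of_pos (hgsingle i) _
  set c0 : Fin k → Fin k → ℝ := fun i => s0 i • (Pi.single i 1 : Fin k → ℝ) with hc0
  have hc0S : c0 ∈ S := by
    intro i
    show g (s0 i • (Pi.single i 1 : Fin k → ℝ)) = 1
    rw [g_smul, abs_of_nonneg (hs0pos i).le, hs0]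
    rw [← Real.rpow_mul (hgsingle i).le, neg_mul, one_div, inv_mul_cancel₀ hp0.ne',
      Real.rpow_neg_one, inv_mul_cancel₀ (hgsingle i).ne']
  -- maximize |det| over S
  set Mf : (Fin k → Fin k → ℝ) → Matrix (Fin k) (Fin k) ℝ :=
    fun c => Matrix.of fun r i => c i r with hMf
  have hMfcont : Continuous fun c => |(Mf c).det| := by
    refine continuous_abs.comp (Continuous.matrix_det (continuous_matrix fun r i => ?_))
    exact (continuous_apply r).comp (continuous_apply i)
  obtain ⟨c, hcS, hcmax'⟩ := hScomp.exists_isMaxOn ⟨c0, hc0S⟩ hMfcont.continuousOn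
  have hcmax : ∀ c' ∈ S, |(Mf c').det| ≤ |(Mf c).det| := fun c' h => hcmax' h
  set N := Mf c with hN
  have hdetc0 : (Mf c0).det ≠ 0 := by
    have hdiag : Mf c0 = Matrix.diagonal s0 := by
      ext r i
      simp only [hMf, hc0, Matrix.of_apply, Pi.smul_apply, Pi.single_apply, smul_eq_mul,
        Matrix.diagonal]
      by_cases h : r = i
      · subst h; simp
      · simp [h, Ne.symm h]
    rw [hdiag, Matrix.det_diagonal]
    exact Finset.prod_ne_zero_iff.mpr fun i _ => (hs0pos i).ne'
  have hdetN : N.det ≠ 0 := by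
    intro h
    have h1 := hcmax c0 hc0S
    rw [h] at h1
    simp at h1
    exact hdetc0 h1
  have hNunit : IsUnit N.det := isUnit_iff_ne_zero.mpr hdetN
  -- the dual (Auerbach) property
  have dual : ∀ (w : Fin k → ℝ) (i : Fin k), |(N⁻¹.mulVec w) i| ^ p ≤ g w := by
    intro w i
    by_cases hw : w = 0
    · subst hw
      rw [Matrix.mulVec_zero]
      simp [Real.zero_rpow hp0.ne', g_zero]
    · have hgw : 0 < g w := g_pos w hw
      set t : ℝ := (g w) ^ (1/p) with ht
      have ht0 : 0 < t := Real.rpow_pos_of_pos hgw _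
      have htp : t ^ p = g w := by
        rw [ht, one_div, Real.rpow_inv_rpow hgw.le hp0.ne']
      set d := N⁻¹.mulVec w with hd
      have hwd : N.mulVec d = w := by
        rw [hd, Matrix.mulVec_mulVec, Matrix.mul_nonsing_inv N hNunit, Matrix.one_mulVec]
      set c' := Function.update c i (t⁻¹ • w) with hc'
      have hc'S : c' ∈ S := by
        intro a
        rcases eq_or_ne a i with rfl | ha
        · rw [hc', Function.update_self]
          rw [g_smul, abs_of_nonneg (inv_nonneg.mpr ht0.le), Real.inv_rpow ht0.le, htp,
            inv_mul_cancel₀ hgw.ne']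
        · rw [hc', Function.update_of_ne ha]
          exact hcS a
      have hMc' : Mf c' = N.updateCol i (N.mulVec (t⁻¹ • d)) := by
        have hmv : N.mulVec (t⁻¹ • d) = t⁻¹ • w := by rw [Matrix.mulVec_smul, hwd]
        rw [hmv]
        ext r a
        simp only [hMf, Matrix.of_apply, hc', Function.update_apply, Matrix.updateCol_apply,
          hN]
        by_cases h : a = i
        · simp [h]
        · simp [h]
      have hdet' : (Mf c').det = t⁻¹ * d i * N.det := by
        rw [hMc', det_updateColumn_mulVec]
        simp only [Pi.smul_apply, smul_eq_mul]
      have hle := hcmax c' hc'S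
      rw [hdet'] at hle
      have h2 : |d i| ≤ t := by
        rw [abs_mul, abs_mul] at hle
        have hdpos : 0 < |N.det| := abs_pos.mpr hdetN
        have h3 : |t⁻¹| * |d i| ≤ 1 := by
          by_contra h4
          push_neg at h4
          nlinarith
        rw [abs_inv, abs_of_nonneg ht0.le] at h3
        calc |d i| = t * (t⁻¹ * |d i|) := by field_simp
          _ ≤ t * 1 := mul_le_mul_of_nonneg_left h3 ht0.le
          _ = t := mul_one t
      calc |d i| ^ p ≤ t ^ p := Real.rpow_le_rpow (abs_nonneg _) h2 hp0.le
        _ = g w := htp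
  -- norm of F * N
  have hA : lpPowR p (F * N) = (k : ℝ) := by
    unfold lpPowR
    rw [Finset.sum_comm]
    have : ∀ i : Fin k, ∑ r, |(F * N) r i| ^ p = g (c i) := by
      intro i
      refine Finset.sum_congr rfl fun r _ => ?_
      congr 2
    rw [Finset.sum_congr rfl fun i _ => this i]
    calc ∑ _i : Fin k, g (c _i) = ∑ _i : Fin k, (1:ℝ) := Finset.sum_congr rfl fun i _ => hcS i
      _ = k := by simp
  -- norms involving G
  set y : Fin m → Fin k → ℝ := fun j a => G j a with hy
  have hGentry : ∀ (j : Fin m) (i : Fin k), (G * (N⁻¹)ᵀ) j i = (N⁻¹.mulVec (y j)) i := by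
    intro j i
    simp [Matrix.mul_apply, Matrix.mulVec, dotProduct, Matrix.transpose_apply, hy,
      mul_comm]
  have hC : lpPowR p (F * Gᵀ) = ∑ j, g (y j) := by
    unfold lpPowR
    rw [Finset.sum_comm]
    refine Finset.sum_congr rfl fun j _ => Finset.sum_congr rfl fun r _ => ?_
    congr 2
  have hCnonneg : 0 ≤ lpPowR p (F * Gᵀ) := by
    rw [hC]; exact Finset.sum_nonneg fun j _ => g_nonneg _
  set B := lpPowR p (G * (N⁻¹)ᵀ) with hB
  have hBle : B ≤ (k : ℝ) * lpPowR p (F * Gᵀ) := by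
    rw [hB, hC]
    unfold lpPowR
    calc ∑ j, ∑ i, |(G * (N⁻¹)ᵀ) j i| ^ p
        ≤ ∑ j : Fin m, ∑ _i : Fin k, g (y j) := by
          refine Finset.sum_le_sum fun j _ => Finset.sum_le_sum fun i _ => ?_
          rw [hGentry j i]
          exact dual (y j) i
      _ = (k : ℝ) * ∑ j, g (y j) := by
          rw [Finset.mul_sum]
          refine Finset.sum_congr rfl fun j _ => ?_
          simp [mul_comm]
  have hBpos : 0 < B := by
    rcases lt_or_eq_of_le (Finset.sum_nonneg fun j (_ : j ∈ Finset.univ) =>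
      Finset.sum_nonneg fun i _ => Real.rpow_nonneg (abs_nonneg ((G * (N⁻¹)ᵀ) j i)) p) with h | h
    · exact h
    · exfalso
      have hzero : ∀ (j : Fin m) (i : Fin k), (G * (N⁻¹)ᵀ) j i = 0 := by
        intro j i
        have h1 := (Finset.sum_eq_zero_iff_of_nonneg fun j (_ : j ∈ Finset.univ) =>
          Finset.sum_nonneg fun i _ =>
            Real.rpow_nonneg (abs_nonneg ((G * (N⁻¹)ᵀ) j i)) p).mp h.symm j (Finset.mem_univ j)
        have h2 := (Finset.sum_eq_zero_iff_of_nonneg fun i (_ : i ∈ Finset.univ) =>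
          Real.rpow_nonneg (abs_nonneg ((G * (N⁻¹)ᵀ) j i)) p).mp h1 i (Finset.mem_univ i)
        have := (Real.rpow_eq_zero (abs_nonneg _) hp0.ne').mp h2
        exact abs_eq_zero.mp this
      have hGN0 : G * (N⁻¹)ᵀ = 0 := by
        ext j i; exact hzero j i
      have hG0 : G = 0 := by
        have h1 : (N⁻¹)ᵀ * Nᵀ = 1 := by
          rw [← Matrix.transpose_mul, Matrix.mul_nonsing_inv N hNunit, Matrix.transpose_one]
        calc G = G * ((N⁻¹)ᵀ * Nᵀ) := by rw [h1, Matrix.mul_one]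
          _ = (G * (N⁻¹)ᵀ) * Nᵀ := by rw [Matrix.mul_assoc]
          _ = 0 := by rw [hGN0, Matrix.zero_mul]
      rw [hG0, Matrix.rank_zero] at hG
      omega
  -- scaling
  set cc : ℝ := (B / k) ^ (1/(2*p)) with hcc
  have hBk : 0 < B / k := div_pos hBpos hkR
  have hccpos : 0 < cc := Real.rpow_pos_of_pos hBk _
  have hccp : cc ^ p = Real.sqrt (B / k) := by
    rw [hcc, ← Real.rpow_mul hBk.le]
    have hexp : 1/(2*p) * p = 1/2 := by field_simp
    rw [hexp, Real.sqrt_eq_rpow]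
  have hinv : (cc • N)⁻¹ = cc⁻¹ • N⁻¹ := by
    apply Matrix.inv_eq_right_inv
    rw [Matrix.smul_mul, Matrix.mul_smul, smul_smul, mul_inv_cancel₀ hccpos.ne', one_smul,
      Matrix.mul_nonsing_inv N hNunit]
  have hlpF : lpPowR p (F * (cc • N)) = Real.sqrt (B / k) * k := by
    rw [Matrix.mul_smul, lpPowR_smul hp0, abs_of_nonneg hccpos.le, hccp, hA]
  have hlpG : lpPowR p (G * ((cc • N)⁻¹)ᵀ) = (Real.sqrt (B / k))⁻¹ * B := by
    rw [hinv, Matrix.transpose_smul, Matrix.mul_smul, lpPowR_smul hp0,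
      abs_of_nonneg (inv_nonneg.mpr hccpos.le), Real.inv_rpow hccpos.le, hccp, hB]
  have hspos : 0 < Real.sqrt (B / k) := Real.sqrt_pos.mpr hBk
  have hs2 : Real.sqrt (B / k) ^ 2 = B / k := Real.sq_sqrt hBk.le
  refine ⟨cc • N, ?_, ?_, ?_⟩
  · rw [Matrix.det_smul]
    exact isUnit_iff_ne_zero.mpr (mul_ne_zero (pow_ne_zero _ hccpos.ne') hdetN)
  · rw [hlpF, hlpG]
    set s := Real.sqrt (B / k) with hsdef
    rw [eq_comm, inv_mul_eq_iff_eq_mul₀ hspos.ne', ← mul_assoc]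
    have hss : s * s = B / k := by rw [← hs2]; ring
    rw [hss]
    field_simp
  · rw [hlpF]
    have h1 : B / ↑k ≤ lpPowR p (F * Gᵀ) := by
      rw [div_le_iff₀ hkR]
      calc B ≤ (k:ℝ) * lpPowR p (F * Gᵀ) := hBle
        _ = lpPowR p (F * Gᵀ) * k := mul_comm _ _
    calc Real.sqrt (B / ↑k) * ↑k ≤ Real.sqrt (lpPowR p (F * Gᵀ)) * ↑k :=
          mul_le_mul_of_nonneg_right (Real.sqrt_le_sqrt h1) hkR.le
      _ = ↑k * Real.sqrt (lpPowR p (F * Gᵀ)) := mul_comm _ _
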